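/- Let N ≥ 3, let a : ℝ → (0,∞)^{2N} be a differentiable solution of the periodic Volterra lattice equations ȧ_j = a_j(a_{j+1} − a_{j−1}), and fix n ≥ 1. Writing M(t) = L(a(t))^{2n}, for every j (indices mod 2N) and every t one has d/dt M(t)_{j,j} = √(a_{j−2}(t) a_{j−1}(t)) · M(t)_{j,j−2} − √(a_j(t) a_{j+1}(t)) · M(t)_{j,j+2}. -/

import Mathlib

open Matrix

instance neZeroTwoMul (N : ℕ) [NeZero N] : NeZero (2 * N) :=
  ⟨by have := NeZero.ne N; omega⟩

/-- `Emat N r s` is the `2N × 2N` real matrix with a `1` in position `(r, s)`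
and zeros elsewhere, indices taken mod `2N`. -/
noncomputable def Emat (N : ℕ) [NeZero N] (r s : ZMod (2 * N)) :
    Matrix (ZMod (2 * N)) (ZMod (2 * N)) ℝ :=
  Matrix.single r s 1

/-- The antisymmetric Lax matrix of the Volterra lattice:
`L(a) = ∑ j, √(a j) • (E_{j,j+1} - E_{j+1,j})`. -/
noncomputable def LaxL (N : ℕ) [NeZero N] (a : ZMod (2 * N) → ℝ) :
    Matrix (ZMod (2 * N)) (ZMod (2 * N)) ℝ :=
  ∑ j : ZMod (2 * N), Real.sqrt (a j) • (Emat N j (j + 1) - Emat N (j + 1) j)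

noncomputable def Bmat (N : ℕ) [NeZero N] (a : ZMod (2 * N) → ℝ) :
    Matrix (ZMod (2 * N)) (ZMod (2 * N)) ℝ :=
  ∑ k : ZMod (2 * N), ((1/2) * (Real.sqrt (a k) * Real.sqrt (a (k + 1)))) •
    (Emat N (k + 2) k - Emat N k (k + 2))

lemma LaxL_apply (N : ℕ) [NeZero N] (a : ZMod (2 * N) → ℝ) (p q : ZMod (2 * N)) :
    LaxL N a p q = (if q = p + 1 then Real.sqrt (a p) else 0)
      - (if p = q + 1 then Real.sqrt (a q) else 0) := by
  simp only [LaxL, Emat, Matrix.sum_apply, Matrix.smul_apply, Matrix.sub_apply,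
    Matrix.single, Matrix.of_apply, smul_eq_mul, mul_sub, mul_ite, mul_one, mul_zero]
  rw [Finset.sum_sub_distrib]
  congr 1
  · rw [Finset.sum_eq_single p (fun b _ hb => by simp [hb]) (by simp)]
    simp [eq_comm]
  · rw [Finset.sum_eq_single q (fun b _ hb => by simp [hb]) (by simp)]
    simp [eq_comm]

lemma Bmat_apply (N : ℕ) [NeZero N] (a : ZMod (2 * N) → ℝ) (p q : ZMod (2 * N)) :
    Bmat N a p q
      = (if p = q + 2 then (1/2) * (Real.sqrt (a q) * Real.sqrt (a (q + 1))) else 0)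
      - (if q = p + 2 then (1/2) * (Real.sqrt (a p) * Real.sqrt (a (p + 1))) else 0) := by
  simp only [Bmat, Emat, Matrix.sum_apply, Matrix.smul_apply, Matrix.sub_apply,
    Matrix.single, Matrix.of_apply, smul_eq_mul, mul_sub, mul_ite, mul_one, mul_zero]
  rw [Finset.sum_sub_distrib]
  congr 1
  · rw [Finset.sum_eq_single q (fun b _ hb => by simp [hb]) (by simp)]
    simp [eq_comm]
  · rw [Finset.sum_eq_single p (fun b _ hb => by simp [hb]) (by simp)]
    simp [eq_comm]

lemma Emul (N : ℕ) [NeZero N] (r s u v : ZMod (2 * N)) :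
    Emat N r s * Emat N u v = if s = u then Emat N r v else 0 := by
  by_cases h : s = u
  · subst h
    rw [if_pos rfl]
    simp [Emat, Matrix.single_mul_single_same]
  · rw [if_neg h]
    simp only [Emat]
    exact Matrix.single_mul_single_of_ne (i := r) (j := s) (k := u) (c := 1) h 1

lemma shift_sum {M : Type*} [AddCommMonoid M] (N : ℕ) [NeZero N]
    (F : ZMod (2 * N) → M) (c : ZMod (2 * N)) :
    ∑ k : ZMod (2 * N), F (k + c) = ∑ k : ZMod (2 * N), F k :=
  Fintype.sum_equiv (Equiv.addRight c) _ _ (fun _ => rfl)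

lemma BL_expand (N : ℕ) [NeZero N] (f g : ZMod (2 * N) → ℝ) :
    (∑ k : ZMod (2 * N), f k • (Emat N (k + 2) k - Emat N k (k + 2)))
      * (∑ j : ZMod (2 * N), g j • (Emat N j (j + 1) - Emat N (j + 1) j))
    = ∑ k : ZMod (2 * N),
        ((f k * g k) • Emat N (k + 2) (k + 1) - (f k * g (k - 1)) • Emat N (k + 2) (k - 1)
          - (f k * g (k + 2)) • Emat N k (k + 3) + (f k * g (k + 1)) • Emat N k (k + 1)) := by
  rw [Finset.sum_mul_sum]
  refine Finset.sum_congr rfl fun k _ => ?_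
  have expand : ∀ j : ZMod (2 * N),
      (f k • (Emat N (k + 2) k - Emat N k (k + 2))) * (g j • (Emat N j (j + 1) - Emat N (j + 1) j))
      = (if j = k then (f k * g j) • Emat N (k + 2) (j + 1) else 0)
        - (if j = k - 1 then (f k * g j) • Emat N (k + 2) j else 0)
        - (if j = k + 2 then (f k * g j) • Emat N k (j + 1) else 0)
        + (if j = k + 1 then (f k * g j) • Emat N k j else 0) := by
    intro j
    rw [smul_mul_smul_comm, sub_mul, mul_sub, mul_sub, Emul, Emul, Emul, Emul]
    have c1 : (k = j) ↔ (j = k) := eq_comm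
    have c2 : (k = j + 1) ↔ (j = k - 1) := by constructor <;> intro h <;> linear_combination -h
    have c3 : (k + 2 = j) ↔ (j = k + 2) := eq_comm
    have c4 : (k + 2 = j + 1) ↔ (j = k + 1) := by
      constructor <;> intro h <;> linear_combination -h
    simp only [c1, c2, c3, c4]
    by_cases h1 : j = k <;> by_cases h2 : j = k - 1 <;> by_cases h3 : j = k + 2 <;>
      by_cases h4 : j = k + 1 <;> simp [h1, h2, h3, h4, smul_sub] <;> abel
  simp only [expand]
  rw [Finset.sum_add_distrib, Finset.sum_sub_distrib, Finset.sum_sub_distrib]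
  rw [Finset.sum_ite_eq' Finset.univ k, Finset.sum_ite_eq' Finset.univ (k - 1),
    Finset.sum_ite_eq' Finset.univ (k + 2), Finset.sum_ite_eq' Finset.univ (k + 1)]
  simp only [Finset.mem_univ, if_true]
  rw [show k + 2 + 1 = k + 3 by ring]

lemma LB_expand (N : ℕ) [NeZero N] (f g : ZMod (2 * N) → ℝ) :
    (∑ j : ZMod (2 * N), g j • (Emat N j (j + 1) - Emat N (j + 1) j))
      * (∑ k : ZMod (2 * N), f k • (Emat N (k + 2) k - Emat N k (k + 2)))
    = ∑ j : ZMod (2 * N),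
        ((g j * f (j - 1)) • Emat N j (j - 1) - (g j * f (j + 1)) • Emat N j (j + 3)
          - (g j * f (j - 2)) • Emat N (j + 1) (j - 2) + (g j * f j) • Emat N (j + 1) (j + 2)) := by
  rw [Finset.sum_mul_sum]
  refine Finset.sum_congr rfl fun j _ => ?_
  have expand : ∀ k : ZMod (2 * N),
      (g j • (Emat N j (j + 1) - Emat N (j + 1) j)) * (f k • (Emat N (k + 2) k - Emat N k (k + 2)))
      = (if k = j - 1 then (g j * f k) • Emat N j k else 0)
        - (if k = j + 1 then (g j * f k) • Emat N j (k + 2) else 0)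
        - (if k = j - 2 then (g j * f k) • Emat N (j + 1) k else 0)
        + (if k = j then (g j * f k) • Emat N (j + 1) (k + 2) else 0) := by
    intro k
    rw [smul_mul_smul_comm, sub_mul, mul_sub, mul_sub, Emul, Emul, Emul, Emul]
    have c1 : (j + 1 = k + 2) ↔ (k = j - 1) := by
      constructor <;> intro h <;> linear_combination -h
    have c2 : (j + 1 = k) ↔ (k = j + 1) := eq_comm
    have c3 : (j = k + 2) ↔ (k = j - 2) := by
      constructor <;> intro h <;> linear_combination -h
    have c4 : (j = k) ↔ (k = j) := eq_comm
    simp only [c1, c2, c3, c4]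
    by_cases h1 : k = j - 1 <;> by_cases h2 : k = j + 1 <;> by_cases h3 : k = j - 2 <;>
      by_cases h4 : k = j <;> simp [h1, h2, h3, h4, smul_sub] <;> abel
  simp only [expand]
  rw [Finset.sum_add_distrib, Finset.sum_sub_distrib, Finset.sum_sub_distrib]
  rw [Finset.sum_ite_eq' Finset.univ (j - 1), Finset.sum_ite_eq' Finset.univ (j + 1),
    Finset.sum_ite_eq' Finset.univ (j - 2), Finset.sum_ite_eq' Finset.univ j]
  simp only [Finset.mem_univ, if_true]
  rw [show j + 1 + 2 = j + 3 by ring]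

lemma comm_identity (N : ℕ) [NeZero N] (a : ZMod (2 * N) → ℝ) (ha : ∀ j, 0 < a j) :
    Bmat N a * LaxL N a - LaxL N a * Bmat N a
      = ∑ j : ZMod (2 * N), ((1/2) * (Real.sqrt (a j) * (a (j + 1) - a (j - 1)))) •
          (Emat N j (j + 1) - Emat N (j + 1) j) := by
  have hs : ∀ k : ZMod (2 * N), Real.sqrt (a k) * Real.sqrt (a k) = a k :=
    fun k => Real.mul_self_sqrt (ha k).le
  set f : ZMod (2 * N) → ℝ := fun k => (1/2) * (Real.sqrt (a k) * Real.sqrt (a (k + 1))) with hf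
  set g : ZMod (2 * N) → ℝ := fun k => Real.sqrt (a k) with hg
  have hBdef : Bmat N a = ∑ k : ZMod (2 * N), f k • (Emat N (k + 2) k - Emat N k (k + 2)) := rfl
  have hLdef : LaxL N a = ∑ j : ZMod (2 * N), g j • (Emat N j (j + 1) - Emat N (j + 1) j) := rfl
  rw [hBdef, hLdef, BL_expand, LB_expand]
  -- rewrite the RHS coefficients using squares of roots
  have hD : ∀ j : ZMod (2 * N),
      ((1/2) * (Real.sqrt (a j) * (a (j + 1) - a (j - 1)))) •
          (Emat N j (j + 1) - Emat N (j + 1) j)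
        = ((1/2) * (g j * (g (j+1) * g (j+1) - g (j-1) * g (j-1)))) •
          (Emat N j (j + 1) - Emat N (j + 1) j) := by
    intro j
    rw [hg]
    simp only []
    rw [hs, hs]
  simp only [hD]
  rw [Finset.sum_add_distrib, Finset.sum_sub_distrib, Finset.sum_sub_distrib,
      Finset.sum_add_distrib, Finset.sum_sub_distrib, Finset.sum_sub_distrib]
  -- shift the four non-canonical sums
  have s1 : ∑ k : ZMod (2 * N), (f k * g k) • Emat N (k + 2) (k + 1)
      = ∑ k : ZMod (2 * N), (f (k - 1) * g (k - 1)) • Emat N (k + 1) k := by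
    rw [← shift_sum N (fun k => (f (k - 1) * g (k - 1)) • Emat N (k + 1) k) 1]
    refine Finset.sum_congr rfl fun k _ => ?_
    rw [show k + 1 - 1 = k by ring, show k + 1 + 1 = k + 2 by ring]
  have s2 : ∑ k : ZMod (2 * N), (f k * g (k - 1)) • Emat N (k + 2) (k - 1)
      = ∑ k : ZMod (2 * N), (f (k + 1) * g k) • Emat N (k + 3) k := by
    rw [← shift_sum N (fun k => (f (k + 1) * g k) • Emat N (k + 3) k) (-1)]
    refine Finset.sum_congr rfl fun k _ => ?_
    rw [show k + -1 + 1 = k by ring, show k + -1 + 3 = k + 2 by ring,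
        show k + -1 = k - 1 by ring]
  have s3 : ∑ k : ZMod (2 * N), (g k * f (k - 1)) • Emat N k (k - 1)
      = ∑ k : ZMod (2 * N), (g (k + 1) * f k) • Emat N (k + 1) k := by
    rw [← shift_sum N (fun k => (g (k + 1) * f k) • Emat N (k + 1) k) (-1)]
    refine Finset.sum_congr rfl fun k _ => ?_
    rw [show k + -1 + 1 = k by ring, show k + -1 = k - 1 by ring]
  have s4 : ∑ k : ZMod (2 * N), (g k * f (k - 2)) • Emat N (k + 1) (k - 2)
      = ∑ k : ZMod (2 * N), (g (k + 2) * f k) • Emat N (k + 3) k := by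
    rw [← shift_sum N (fun k => (g (k + 2) * f k) • Emat N (k + 3) k) (-2)]
    refine Finset.sum_congr rfl fun k _ => ?_
    rw [show k + -2 + 2 = k by ring, show k + -2 + 3 = k + 1 by ring,
        show k + -2 = k - 2 by ring]
  have s5 : ∑ k : ZMod (2 * N), (g k * f k) • Emat N (k + 1) (k + 2)
      = ∑ k : ZMod (2 * N), (g (k - 1) * f (k - 1)) • Emat N k (k + 1) := by
    rw [← shift_sum N (fun k => (g (k - 1) * f (k - 1)) • Emat N k (k + 1)) 1]
    refine Finset.sum_congr rfl fun k _ => ?_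
    rw [show k + 1 - 1 = k by ring, show k + 1 + 1 = k + 2 by ring]
  rw [s1, s2, s3, s4, s5]
  rw [← Finset.sum_sub_distrib, ← Finset.sum_sub_distrib, ← Finset.sum_add_distrib,
      ← Finset.sum_sub_distrib, ← Finset.sum_sub_distrib, ← Finset.sum_add_distrib,
      ← Finset.sum_sub_distrib]
  refine Finset.sum_congr rfl fun k _ => ?_
  have e1 : k + 1 + 2 = k + 3 := by ring
  have e2 : k - 1 + 1 = k := by ring
  simp only [hf, hg]
  simp only [show k - 1 + 1 = k from by ring, show k + 1 + 1 = k + 2 from by ring,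
    show k + 2 + 1 = k + 3 from by ring]
  module

lemma Bmat_apply_fst (N : ℕ) [NeZero N] (a : ZMod (2 * N) → ℝ) (u v : ZMod (2 * N)) :
    Bmat N a u v
      = (if v = u - 2 then (1/2) * (Real.sqrt (a (u - 2)) * Real.sqrt (a (u - 1))) else 0)
      - (if v = u + 2 then (1/2) * (Real.sqrt (a u) * Real.sqrt (a (u + 1))) else 0) := by
  rw [Bmat_apply]
  have h1 : (u = v + 2) ↔ (v = u - 2) := by constructor <;> intro h <;> linear_combination -h
  by_cases h : v = u - 2
  · rw [if_pos h, if_pos (h1.mpr h)]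
    subst h
    rw [show u - 2 + 1 = u - 1 by ring]
  · rw [if_neg h, if_neg (fun h2 => h (h1.mp h2))]

lemma Bmat_apply_snd (N : ℕ) [NeZero N] (a : ZMod (2 * N) → ℝ) (u v : ZMod (2 * N)) :
    Bmat N a u v
      = (if u = v + 2 then (1/2) * (Real.sqrt (a v) * Real.sqrt (a (v + 1))) else 0)
      - (if u = v - 2 then (1/2) * (Real.sqrt (a (v - 2)) * Real.sqrt (a (v - 1))) else 0) := by
  rw [Bmat_apply]
  have h1 : (v = u + 2) ↔ (u = v - 2) := by constructor <;> intro h <;> linear_combination -h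
  by_cases h : u = v - 2
  · rw [if_pos h, if_pos (h1.mpr h)]
    subst h
    rw [show v - 2 + 1 = v - 1 by ring]
  · rw [if_neg h, if_neg (fun h2 => h (h1.mp h2))]

lemma LaxL_transpose (N : ℕ) [NeZero N] (a : ZMod (2 * N) → ℝ) :
    (LaxL N a)ᵀ = - LaxL N a := by
  ext p q
  rw [Matrix.transpose_apply, Matrix.neg_apply, LaxL_apply, LaxL_apply]
  ring

lemma LaxL_pow_symm (N : ℕ) [NeZero N] (a : ZMod (2 * N) → ℝ) (n : ℕ) (u v : ZMod (2 * N)) :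
    (LaxL N a ^ (2 * n)) u v = (LaxL N a ^ (2 * n)) v u := by
  have h : (LaxL N a ^ (2 * n))ᵀ = LaxL N a ^ (2 * n) := by
    rw [Matrix.transpose_pow, LaxL_transpose, Even.neg_pow (even_two_mul n)]
  conv_lhs => rw [← h]
  exact Matrix.transpose_apply _ u v

attribute [local instance] Matrix.linftyOpNormedRing Matrix.linftyOpNormedAlgebra

lemma hasDerivAt_LaxL (N : ℕ) [NeZero N] (a : ℝ → ZMod (2 * N) → ℝ)
    (hpos : ∀ t j, 0 < a t j)
    (hvolt : ∀ t j, HasDerivAt (fun s => a s j) (a t j * (a t (j + 1) - a t (j - 1))) t)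
    (t : ℝ) :
    HasDerivAt (fun s => LaxL N (a s))
      (Bmat N (a t) * LaxL N (a t) - LaxL N (a t) * Bmat N (a t)) t := by
  rw [comm_identity N (a t) (hpos t)]
  have key : ∀ j : ZMod (2 * N), HasDerivAt (fun s => Real.sqrt (a s j) •
        (Emat N j (j + 1) - Emat N (j + 1) j))
      (((1/2) * (Real.sqrt (a t j) * (a t (j + 1) - a t (j - 1)))) •
        (Emat N j (j + 1) - Emat N (j + 1) j)) t := by
    intro j
    have h1 : HasDerivAt (fun s => Real.sqrt (a s j))
        ((a t j * (a t (j + 1) - a t (j - 1))) / (2 * Real.sqrt (a t j))) t :=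
      (hvolt t j).sqrt (ne_of_gt (hpos t j))
    have h2 : (a t j * (a t (j + 1) - a t (j - 1))) / (2 * Real.sqrt (a t j))
        = (1/2) * (Real.sqrt (a t j) * (a t (j + 1) - a t (j - 1))) := by
      have hs : Real.sqrt (a t j) * Real.sqrt (a t j) = a t j :=
        Real.mul_self_sqrt (hpos t j).le
      have hne : Real.sqrt (a t j) > 0 := Real.sqrt_pos.mpr (hpos t j)
      rw [div_eq_iff (by positivity)]
      linear_combination (a t (j - 1) - a t (j + 1)) * hs
    rw [← h2]
    exact h1.smul_const _
  exact HasDerivAt.fun_sum (fun j _ => key j)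

lemma hasDerivAt_LaxL_pow (N : ℕ) [NeZero N] (a : ℝ → ZMod (2 * N) → ℝ)
    (hpos : ∀ t j, 0 < a t j)
    (hvolt : ∀ t j, HasDerivAt (fun s => a s j) (a t j * (a t (j + 1) - a t (j - 1))) t)
    (t : ℝ) (m : ℕ) :
    HasDerivAt (fun s => LaxL N (a s) ^ m)
      (Bmat N (a t) * LaxL N (a t) ^ m - LaxL N (a t) ^ m * Bmat N (a t)) t := by
  induction m with
  | zero =>
    simp only [pow_zero, mul_one, one_mul, sub_self]
    exact hasDerivAt_const t 1
  | succ m ih =>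
    have h := ih.mul (hasDerivAt_LaxL N a hpos hvolt t)
    have heq : (Bmat N (a t) * LaxL N (a t) ^ m - LaxL N (a t) ^ m * Bmat N (a t))
          * LaxL N (a t)
        + LaxL N (a t) ^ m * (Bmat N (a t) * LaxL N (a t) - LaxL N (a t) * Bmat N (a t))
        = Bmat N (a t) * LaxL N (a t) ^ (m + 1) - LaxL N (a t) ^ (m + 1) * Bmat N (a t) := by
      rw [pow_succ]
      noncomm_ring
    rw [← heq]
    have hfun : (fun s => LaxL N (a s) ^ (m + 1)) = fun s => LaxL N (a s) ^ m * LaxL N (a s) := by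
      funext s; rw [pow_succ]
    rw [hfun]
    exact h

lemma hasDerivAt_entry (N : ℕ) [NeZero N] (Mf : ℝ → Matrix (ZMod (2 * N)) (ZMod (2 * N)) ℝ)
    (M' : Matrix (ZMod (2 * N)) (ZMod (2 * N)) ℝ) (t : ℝ) (h : HasDerivAt Mf M' t)
    (u v : ZMod (2 * N)) :
    HasDerivAt (fun s => Mf s u v) (M' u v) t := by
  let φ : Matrix (ZMod (2 * N)) (ZMod (2 * N)) ℝ →ₗ[ℝ] ℝ :=
    { toFun := fun M => M u v
      map_add' := fun _ _ => rfl
      map_smul' := fun _ _ => rfl }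
  have := (LinearMap.toContinuousLinearMap φ).hasFDerivAt.comp_hasDerivAt t h
  exact this

/-- Along a differentiable positive solution of the periodic Volterra lattice, writing
`M(t) = L(a(t))^{2n}`, the diagonal entries satisfy
`d/dt M(t)_{j,j} = √(a_{j−2} a_{j−1}) M(t)_{j,j−2} − √(a_j a_{j+1}) M(t)_{j,j+2}`. -/
theorem deriv_diag_LaxL_pow (N : ℕ) [NeZero N] (hN : 3 ≤ N) (n : ℕ) (hn : 1 ≤ n)
    (a : ℝ → ZMod (2 * N) → ℝ)
    (hpos : ∀ t j, 0 < a t j)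
    (hvolt : ∀ t j, HasDerivAt (fun s => a s j) (a t j * (a t (j + 1) - a t (j - 1))) t) :
    ∀ (t : ℝ) (j : ZMod (2 * N)),
      HasDerivAt (fun s => (LaxL N (a s) ^ (2 * n)) j j)
        (Real.sqrt (a t (j - 2) * a t (j - 1)) * (LaxL N (a t) ^ (2 * n)) j (j - 2)
          - Real.sqrt (a t j * a t (j + 1)) * (LaxL N (a t) ^ (2 * n)) j (j + 2)) t := by
  intro t j
  have hM := hasDerivAt_LaxL_pow N a hpos hvolt t (2 * n)
  have h1 := hasDerivAt_entry N _ _ t hM j j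
  have key : (Bmat N (a t) * (LaxL N (a t) ^ (2 * n))
        - (LaxL N (a t) ^ (2 * n)) * Bmat N (a t)) j j
      = Real.sqrt (a t (j - 2) * a t (j - 1)) * (LaxL N (a t) ^ (2 * n)) j (j - 2)
        - Real.sqrt (a t j * a t (j + 1)) * (LaxL N (a t) ^ (2 * n)) j (j + 2) := by
    set M := LaxL N (a t) ^ (2 * n) with hMdef
    rw [Matrix.sub_apply, Matrix.mul_apply, Matrix.mul_apply]
    have e1 : ∀ x, Bmat N (a t) j x * M x j
        = ((if x = j - 2 then (1/2) * (Real.sqrt (a t (j - 2)) * Real.sqrt (a t (j - 1))) else 0)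
          - (if x = j + 2 then (1/2) * (Real.sqrt (a t j) * Real.sqrt (a t (j + 1))) else 0))
            * M x j := fun x => by rw [Bmat_apply_fst]
    have e2 : ∀ x, M j x * Bmat N (a t) x j
        = M j x * ((if x = j + 2 then (1/2) * (Real.sqrt (a t j) * Real.sqrt (a t (j + 1))) else 0)
          - (if x = j - 2 then (1/2) * (Real.sqrt (a t (j - 2)) * Real.sqrt (a t (j - 1))) else 0))
          := fun x => by rw [Bmat_apply_snd]
    simp only [e1, e2, sub_mul, mul_sub, ite_mul, mul_ite, zero_mul, mul_zero,
      Finset.sum_sub_distrib, Finset.sum_ite_eq', Finset.mem_univ, if_true]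
    rw [show M (j - 2) j = M j (j - 2) from LaxL_pow_symm N (a t) n (j - 2) j,
      show M (j + 2) j = M j (j + 2) from LaxL_pow_symm N (a t) n (j + 2) j]
    rw [Real.sqrt_mul (hpos t (j - 2)).le, Real.sqrt_mul (hpos t j).le]
    ring
  rw [key] at h1
  exact h1
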